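/- (Theorem 3.1, main identity.) Let y^t be a flow vector with all components nonnegative, and set α^t_{ℓk} = q_{ℓk}(y^t) for all ℓ ∈ L and k ∈ K. For ℓ ∈ L, j ∈ J, k ∈ K define the DR linearization σ_{ℓjk}(y) = α^t_{ℓk} · yLJ_{ℓj} + (yLJ^t_{ℓj} / ∑_{r∈J} yLJ^t_{ℓr}) · (∑_{i∈I} λ_{ik} yIL_{iℓ} − α^t_{ℓk} · ∑_{r∈J} yLJ_{ℓr}) if ∑_{r∈J} yLJ^t_{ℓr} > 0, and σ_{ℓjk}(y) = 0 otherwise; and define the Taylor linearization τ_{ℓjk}(y) = q_{ℓk}(y^t) · yLJ^t_{ℓj} + D[y ↦ q_{ℓk}(y) · yLJ_{ℓj}](y^t)(y − y^t) (the Fréchet derivative of the function y ↦ q_{ℓk}(y)·yLJ_{ℓj} at y^t applied to y − y^t) if ∑_{r∈J} yLJ^t_{ℓr} > 0, and τ_{ℓjk}(y) = 0 otherwise. Then σ_{ℓjk}(y) = τ_{ℓjk}(y) for every flow vector y and all ℓ ∈ L, j ∈ J, k ∈ K. -/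

import Mathlib

open scoped BigOperators

/-- A flow vector on the complete tripartite pooling network. -/
abbrev FlowVec (I L J : Type*) : Type _ :=
  (I → L → ℝ) × (I → J → ℝ) × (L → J → ℝ)

/-- The pool quality `q_{ℓk}(y)`. -/
noncomputable def poolQuality {I L J K : Type*} [Fintype I] [Fintype J]
    (lam : I → K → ℝ) (ℓ : L) (k : K) (y : FlowVec I L J) : ℝ :=
  if 0 < ∑ j, y.2.2 ℓ j then (∑ i, lam i k * y.1 i ℓ) / (∑ j, y.2.2 ℓ j) else 0

section Aux

variable {I L J : Type*} [Fintype I] [Fintype L] [Fintype J]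

noncomputable def Nclm (lam : I → ℝ) (ℓ : L) : FlowVec I L J →L[ℝ] ℝ :=
  ∑ i, lam i • ((ContinuousLinearMap.proj ℓ).comp ((ContinuousLinearMap.proj i).comp
    (ContinuousLinearMap.fst ℝ (I → L → ℝ) ((I → J → ℝ) × (L → J → ℝ)))))

noncomputable def Dclm (ℓ : L) : FlowVec I L J →L[ℝ] ℝ :=
  ∑ r : J, (ContinuousLinearMap.proj r).comp ((ContinuousLinearMap.proj ℓ).comp
    ((ContinuousLinearMap.snd ℝ (I → J → ℝ) (L → J → ℝ)).comp
      (ContinuousLinearMap.snd ℝ (I → L → ℝ) ((I → J → ℝ) × (L → J → ℝ)))))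

noncomputable def Pclm (ℓ : L) (j : J) : FlowVec I L J →L[ℝ] ℝ :=
  (ContinuousLinearMap.proj j).comp ((ContinuousLinearMap.proj ℓ).comp
    ((ContinuousLinearMap.snd ℝ (I → J → ℝ) (L → J → ℝ)).comp
      (ContinuousLinearMap.snd ℝ (I → L → ℝ) ((I → J → ℝ) × (L → J → ℝ)))))

set_option linter.unusedSectionVars false

@[simp] lemma Nclm_apply (lam : I → ℝ) (ℓ : L) (z : FlowVec I L J) :
    Nclm lam ℓ z = ∑ i, lam i * z.1 i ℓ := by simp [Nclm]

@[simp] lemma Dclm_apply (ℓ : L) (z : FlowVec I L J) :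
    Dclm (I := I) ℓ z = ∑ r, z.2.2 ℓ r := by simp [Dclm]

@[simp] lemma Pclm_apply (ℓ : L) (j : J) (z : FlowVec I L J) :
    Pclm (I := I) ℓ j z = z.2.2 ℓ j := by simp [Pclm]

lemma key {K : Type*} (lam : I → K → ℝ) (ℓ : L) (j : J) (k : K) (yt v : FlowVec I L J)
    (hpos : 0 < ∑ r, yt.2.2 ℓ r) :
    fderiv ℝ (fun z : FlowVec I L J => poolQuality lam ℓ k z * z.2.2 ℓ j) yt v =
      ((∑ i, lam i k * yt.1 i ℓ) * (∑ r, yt.2.2 ℓ r)⁻¹) * v.2.2 ℓ j +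
        yt.2.2 ℓ j * ((∑ i, lam i k * yt.1 i ℓ) * (-(((∑ r, yt.2.2 ℓ r) ^ 2)⁻¹) * (∑ r, v.2.2 ℓ r))
          + (∑ r, yt.2.2 ℓ r)⁻¹ * (∑ i, lam i k * v.1 i ℓ)) := by
  have hN : HasFDerivAt (fun z : FlowVec I L J => ∑ i, lam i k * z.1 i ℓ)
      (Nclm (fun i => lam i k) ℓ) yt :=
    (Nclm (J := J) (fun i => lam i k) ℓ).hasFDerivAt (x := yt) |>.congr_of_eventuallyEq
      (Filter.Eventually.of_forall fun z => (Nclm_apply _ ℓ z).symm)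
  have hD : HasFDerivAt (fun z : FlowVec I L J => ∑ r, z.2.2 ℓ r) (Dclm ℓ) yt :=
    (Dclm (I := I) (J := J) ℓ).hasFDerivAt (x := yt) |>.congr_of_eventuallyEq
      (Filter.Eventually.of_forall fun z => (Dclm_apply ℓ z).symm)
  have hP : HasFDerivAt (fun z : FlowVec I L J => z.2.2 ℓ j) (Pclm ℓ j) yt :=
    (Pclm (I := I) ℓ j).hasFDerivAt (x := yt) |>.congr_of_eventuallyEq
      (Filter.Eventually.of_forall fun z => (Pclm_apply ℓ j z).symm)
  have hinv : HasFDerivAt (fun z : FlowVec I L J => (∑ r, z.2.2 ℓ r)⁻¹)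
      ((-(((∑ r, yt.2.2 ℓ r) ^ 2)⁻¹)) • Dclm ℓ) yt :=
    (hasDerivAt_inv hpos.ne').comp_hasFDerivAt yt hD
  have hg := (hN.mul hinv).mul hP
  have hev : (fun z : FlowVec I L J => poolQuality lam ℓ k z * z.2.2 ℓ j) =ᶠ[nhds yt]
      (fun z => (∑ i, lam i k * z.1 i ℓ) * (∑ r, z.2.2 ℓ r)⁻¹ * z.2.2 ℓ j) := by
    have hc : Continuous fun z : FlowVec I L J => ∑ r, z.2.2 ℓ r :=
      (Dclm (I := I) ℓ).continuous.congr fun z => (Dclm_apply ℓ z)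
    have hpev : ∀ᶠ z in nhds yt, 0 < ∑ r, z.2.2 ℓ r :=
      hc.continuousAt.eventually (eventually_gt_nhds hpos)
    filter_upwards [hpev] with z hz
    simp [poolQuality, hz, div_eq_mul_inv]
  rw [hev.fderiv_eq, HasFDerivAt.fderiv (f := fun z : FlowVec I L J => (∑ i, lam i k * z.1 i ℓ) * (∑ r, z.2.2 ℓ r)⁻¹ * z.2.2 ℓ j) hg]
  simp [ContinuousLinearMap.add_apply, ContinuousLinearMap.smul_apply, smul_eq_mul]
  ring

end Aux

/-- Theorem 3.1, main identity: with `α^t = q(y^t)` and `y^t ≥ 0`,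
the DR linearization `σ_{ℓjk}` coincides with the Taylor linearization `τ_{ℓjk}`. -/
theorem drLin_eq_taylorLin
    {I L J K : Type*} [Fintype I] [Fintype L] [Fintype J]
    [Nonempty I] [Nonempty L] [Nonempty J] [Nonempty K]
    (lam : I → K → ℝ)
    (yt : FlowVec I L J)
    (hyt1 : ∀ i ℓ, 0 ≤ yt.1 i ℓ) (hyt2 : ∀ i j, 0 ≤ yt.2.1 i j)
    (hyt3 : ∀ ℓ j, 0 ≤ yt.2.2 ℓ j)
    (αt : L → K → ℝ) (hαt : ∀ ℓ k, αt ℓ k = poolQuality lam ℓ k yt)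
    (σ τ : L → J → K → FlowVec I L J → ℝ)
    (hσ : ∀ ℓ j k y, σ ℓ j k y =
      if 0 < ∑ r, yt.2.2 ℓ r then
        αt ℓ k * y.2.2 ℓ j + (yt.2.2 ℓ j / ∑ r, yt.2.2 ℓ r)
          * ((∑ i, lam i k * y.1 i ℓ) - αt ℓ k * ∑ r, y.2.2 ℓ r)
      else 0)
    (hτ : ∀ ℓ j k y, τ ℓ j k y =
      if 0 < ∑ r, yt.2.2 ℓ r then
        poolQuality lam ℓ k yt * yt.2.2 ℓ j
          + fderiv ℝ (fun z : FlowVec I L J => poolQuality lam ℓ k z * z.2.2 ℓ j) yt (y - yt)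
      else 0) :
    ∀ (ℓ : L) (j : J) (k : K) (y : FlowVec I L J), σ ℓ j k y = τ ℓ j k y := by
  intro ℓ j k y
  rw [hσ, hτ]
  by_cases hpos : 0 < ∑ r, yt.2.2 ℓ r
  · simp only [hpos, if_true]
    rw [key lam ℓ j k yt (y - yt) hpos]
    have hα : αt ℓ k = (∑ i, lam i k * yt.1 i ℓ) / (∑ r, yt.2.2 ℓ r) := by
      rw [hαt]; simp [poolQuality, hpos]
    have hq : poolQuality lam ℓ k yt = (∑ i, lam i k * yt.1 i ℓ) / (∑ r, yt.2.2 ℓ r) := by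
      simp [poolQuality, hpos]
    rw [hα, hq]
    have hD : (∑ r, yt.2.2 ℓ r) ≠ 0 := hpos.ne'
    simp only [Prod.fst_sub, Prod.snd_sub, Pi.sub_apply, mul_sub, sub_mul,
      Finset.sum_sub_distrib]
    field_simp
    ring
  · simp [hpos]
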